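/- Let P be any Borel probability measure on ℝ with ρ₁ > 0, and let η₁ satisfy 0 < η₁ < ρ₁. Define f₁(y) = (m(y) − (1 − η₁) φ(y)) / η₁, which is the only function satisfying (1 − η₁)φ + η₁ f₁ = m pointwise. Then f₁(0) < 0; hence no two-groups decomposition of m with mixing weight η₁ < ρ₁ and a nonnegative non-null component exists. -/
import Mathlib


open MeasureTheory Real

/-- The standard normal density. -/
noncomputable def phi (t : ℝ) : ℝ := (Real.sqrt (2 * Real.pi))⁻¹ * Real.exp (-(t ^ 2) / 2)

/-- The marginal density of `Y` in the signal-plus-noise model. -/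
noncomputable def marginal (P : Measure ℝ) (y : ℝ) : ℝ := ∫ x, phi (y - x) ∂P

/-- The sparsity rate `ρ₁ = ∫ (1 - e^{-x²/2}) dP(x)`. -/
noncomputable def sparsityRate (P : Measure ℝ) : ℝ := ∫ x, (1 - Real.exp (-(x ^ 2) / 2)) ∂P

lemma exp_integrable (P : Measure ℝ) [IsProbabilityMeasure P] :
    Integrable (fun x : ℝ => Real.exp (-(x ^ 2) / 2)) P := by
  apply Integrable.mono' (integrable_const 1)
  · exact (Real.continuous_exp.comp (by continuity)).aestronglyMeasurable
  · filter_upwards with x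
    rw [Real.norm_eq_abs, abs_of_pos (Real.exp_pos _)]
    exact Real.exp_le_one_iff.mpr (by nlinarith [sq_nonneg x])

/-- If `0 < η₁ < ρ₁`, the unique function `f₁` with
`(1 - η₁) φ + η₁ f₁ = m` satisfies `f₁(0) < 0`, so no two-groups decomposition with mixing
weight `η₁ < ρ₁` and a nonnegative non-null component exists. -/
theorem stmt4 (P : Measure ℝ) [IsProbabilityMeasure P]
    (hρ : 0 < sparsityRate P)
    (η₁ : ℝ) (hη₁ : 0 < η₁) (hη₂ : η₁ < sparsityRate P)
    (f₁ : ℝ → ℝ) (hf₁ : ∀ y, f₁ y = (marginal P y - (1 - η₁) * phi y) / η₁) :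
    f₁ 0 < 0 := by
  set c : ℝ := (Real.sqrt (2 * Real.pi))⁻¹ with hc
  have hcpos : 0 < c := by
    rw [hc]
    exact inv_pos.mpr (Real.sqrt_pos.mpr (by positivity))
  have hρ' : sparsityRate P = 1 - ∫ x, Real.exp (-(x ^ 2) / 2) ∂P := by
    rw [sparsityRate, integral_sub (integrable_const 1) (exp_integrable P)]
    simp
  have hm : marginal P 0 = c * (1 - sparsityRate P) := by
    rw [marginal]
    have : ∀ x : ℝ, phi (0 - x) = c * Real.exp (-(x ^ 2) / 2) := by
      intro x
      simp [phi, hc]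
    simp_rw [this]
    rw [integral_const_mul, hρ']
    ring
  have hphi0 : phi 0 = c := by simp [phi, hc]
  rw [hf₁, hm, hphi0]
  apply div_neg_of_neg_of_pos _ hη₁
  nlinarith
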